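/- Let λ : [0,∞) → [0,∞) be a nonincreasing function with ∫₀^∞ s·λ(s) ds = b₀ < ∞. If y : [0,∞) → ℝ satisfies y'' = λ·y with y(0) = 0, y'(0) = 1, then for all t ≥ 0, t ≤ y(t) ≤ e^{b₀}·t. -/

import Mathlib

open Set MeasureTheory Filter Topology

/-- If `y ≥ 0` on the open interval `(0, b)`, then `y'` is monotone on `[0, b]`,
`y' ≥ 1` there, and `y s ≥ s` there. -/
lemma jacobi_aux_step (l y y' : ℝ → ℝ)
    (hl_nonneg : ∀ s : ℝ, 0 ≤ s → 0 ≤ l s)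
    (hy : ∀ t : ℝ, 0 ≤ t → HasDerivAt y (y' t) t)
    (hy' : ∀ t : ℝ, 0 ≤ t → HasDerivAt y' (l t * y t) t)
    (hy0 : y 0 = 0) (hy'0 : y' 0 = 1)
    (b : ℝ) (hb : 0 ≤ b) (hpos : ∀ s ∈ Ioo (0:ℝ) b, 0 ≤ y s) :
    MonotoneOn y' (Icc 0 b) ∧ ∀ s ∈ Icc (0:ℝ) b, 1 ≤ y' s ∧ s ≤ y s := by
  have hmono : MonotoneOn y' (Icc 0 b) := by
    apply monotoneOn_of_deriv_nonneg (convex_Icc 0 b)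
    · exact fun s hs => ((hy' s hs.1).continuousAt).continuousWithinAt
    · intro s hs
      rw [interior_Icc] at hs
      exact ((hy' s hs.1.le).differentiableAt).differentiableWithinAt
    · intro s hs
      rw [interior_Icc] at hs
      rw [(hy' s hs.1.le).deriv]
      exact mul_nonneg (hl_nonneg s hs.1.le) (hpos s hs)
  have h1 : ∀ s ∈ Icc (0:ℝ) b, 1 ≤ y' s := by
    intro s hs
    have := hmono ⟨le_refl 0, hb⟩ hs hs.1
    rwa [hy'0] at this
  refine ⟨hmono, fun s hs => ⟨h1 s hs, ?_⟩⟩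
  have hmono2 : MonotoneOn (fun u => y u - u) (Icc 0 b) := by
    apply monotoneOn_of_deriv_nonneg (convex_Icc 0 b)
    · exact fun u hu => (((hy u hu.1).sub (hasDerivAt_id u)).continuousAt).continuousWithinAt
    · intro u hu
      rw [interior_Icc] at hu
      exact (((hy u hu.1.le).sub (hasDerivAt_id u)).differentiableAt).differentiableWithinAt
    · intro u hu
      rw [interior_Icc] at hu
      have hd : HasDerivAt (fun u => y u - u) (y' u - 1) u :=
        (hy u hu.1.le).sub (hasDerivAt_id u)
      rw [hd.deriv]
      have := h1 u ⟨hu.1.le, hu.2.le⟩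
      linarith
  have := hmono2 ⟨le_refl 0, hb⟩ hs hs.1
  simp only [hy0, sub_zero] at this
  linarith [this]

/-- Nonnegativity of `y` on `[0, ∞)`. -/
lemma jacobi_aux_nonneg (l y y' : ℝ → ℝ)
    (hl_nonneg : ∀ s : ℝ, 0 ≤ s → 0 ≤ l s)
    (hy : ∀ t : ℝ, 0 ≤ t → HasDerivAt y (y' t) t)
    (hy' : ∀ t : ℝ, 0 ≤ t → HasDerivAt y' (l t * y t) t)
    (hy0 : y 0 = 0) (hy'0 : y' 0 = 1) :
    ∀ s : ℝ, 0 ≤ s → 0 ≤ y s := by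
  by_contra hcon
  push_neg at hcon
  obtain ⟨t₀, ht₀, hyt₀⟩ := hcon
  -- y is positive just to the right of 0
  have hδ : ∃ δ > 0, ∀ s ∈ Ioo (0:ℝ) δ, 0 < y s := by
    have h0 : HasDerivAt y 1 0 := by rw [← hy'0]; exact hy 0 le_rfl
    have hslope := hasDerivAt_iff_tendsto_slope.1 h0
    have hslope' : Tendsto (slope y 0) (𝓝[>] 0) (𝓝 1) :=
      hslope.mono_left (nhdsWithin_mono 0 (fun x hx => ne_of_gt hx))
    have hev : ∀ᶠ s in 𝓝[>] (0:ℝ), (1/2 : ℝ) < slope y 0 s :=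
      hslope'.eventually (eventually_gt_nhds (by norm_num))
    have hev2 : ∀ᶠ s in 𝓝[>] (0:ℝ), 0 < y s := by
      filter_upwards [hev, self_mem_nhdsWithin] with s hs hs'
      rw [slope_def_field, hy0, sub_zero, sub_zero] at hs
      have hs0 : (0:ℝ) < s := hs'
      have h2 := (lt_div_iff₀ hs0).1 hs
      nlinarith
    obtain ⟨u, hu, hsub⟩ := mem_nhdsGT_iff_exists_Ioo_subset.1 hev2
    exact ⟨u, hu, fun s hs => hsub hs⟩
  obtain ⟨δ, hδpos, hδy⟩ := hδ
  have ht₀pos : 0 < t₀ := by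
    rcases lt_or_eq_of_le ht₀ with h | h
    · exact h
    · exfalso; rw [← h, hy0] at hyt₀; exact absurd hyt₀ (lt_irrefl 0)
  set S : Set ℝ := {s | s ∈ Icc 0 t₀ ∧ y s < 0} with hS
  have hSne : S.Nonempty := ⟨t₀, ⟨ht₀, le_refl t₀⟩, hyt₀⟩
  have hSbdd : BddBelow S := ⟨0, fun s hs => hs.1.1⟩
  set c := sInf S with hc
  have hcS_lb : ∀ s ∈ S, δ ≤ s := by
    intro s hs
    by_contra hlt
    push_neg at hlt
    have hys := hs.2
    have hs0 : 0 < s := by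
      rcases lt_or_eq_of_le hs.1.1 with h | h
      · exact h
      · exfalso; rw [← h, hy0] at hys; exact absurd hys (lt_irrefl 0)
    exact absurd (hδy s ⟨hs0, hlt⟩) (not_lt.2 hs.2.le)
  have hcpos : δ ≤ c := le_csInf hSne hcS_lb
  have hc0 : 0 ≤ c := le_trans hδpos.le hcpos
  have hct₀ : c ≤ t₀ := csInf_le hSbdd ⟨⟨ht₀, le_refl t₀⟩, hyt₀⟩
  have hyc_le : y c ≤ 0 := by
    by_contra hyc
    push_neg at hyc
    have hcont : ContinuousAt y c := (hy c hc0).continuousAt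
    have hev : ∀ᶠ s in 𝓝 c, 0 < y s := hcont.eventually (eventually_gt_nhds hyc)
    rw [Metric.eventually_nhds_iff] at hev
    obtain ⟨η, hηpos, hη⟩ := hev
    obtain ⟨s, hsS, hslt⟩ := exists_lt_of_csInf_lt hSne (by linarith : sInf S < c + η)
    have hcs : c ≤ s := csInf_le hSbdd hsS
    have : 0 < y s := hη (by rw [Real.dist_eq]; rw [abs_lt]; constructor <;> linarith)
    linarith [hsS.2]
  -- y ≥ 0 on (0, c), so y c ≥ c > 0: contradiction
  have hpos : ∀ s ∈ Ioo (0:ℝ) c, 0 ≤ y s := by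
    intro s hs
    by_contra hneg
    push_neg at hneg
    have : s ∈ S := ⟨⟨hs.1.le, le_trans hs.2.le hct₀⟩, hneg⟩
    linarith [csInf_le hSbdd this, hs.2]
  obtain ⟨_, h⟩ := jacobi_aux_step l y y' hl_nonneg hy hy' hy0 hy'0 c hc0 hpos
  have := (h c ⟨hc0, le_refl c⟩).2
  linarith

theorem jacobi_solution_bounds (l : ℝ → ℝ) (b₀ : ℝ)
    (hl_nonneg : ∀ s : ℝ, 0 ≤ s → 0 ≤ l s)
    (hl_anti : AntitoneOn l (Set.Ici 0))
    (hl_int : MeasureTheory.IntegrableOn (fun s => s * l s) (Set.Ioi 0))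
    (hb₀ : ∫ s in Set.Ioi (0 : ℝ), s * l s = b₀)
    (y y' : ℝ → ℝ)
    (hy : ∀ t : ℝ, 0 ≤ t → HasDerivAt y (y' t) t)
    (hy' : ∀ t : ℝ, 0 ≤ t → HasDerivAt y' (l t * y t) t)
    (hy0 : y 0 = 0) (hy'0 : y' 0 = 1) :
    ∀ t : ℝ, 0 ≤ t → t ≤ y t ∧ y t ≤ Real.exp b₀ * t := by
  have hynn : ∀ s : ℝ, 0 ≤ s → 0 ≤ y s :=
    jacobi_aux_nonneg l y y' hl_nonneg hy hy' hy0 hy'0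
  intro t ht
  have hstep := jacobi_aux_step l y y' hl_nonneg hy hy' hy0 hy'0 t ht
    (fun s hs => hynn s hs.1.le)
  obtain ⟨hmono, hbounds⟩ := hstep
  have hlow : t ≤ y t := (hbounds t ⟨ht, le_refl t⟩).2
  refine ⟨hlow, ?_⟩
  -- y t ≤ t * y' t
  have hy_le : y t ≤ t * y' t := by
    have hmono2 : MonotoneOn (fun s => s * y' t - y s) (Icc 0 t) := by
      apply monotoneOn_of_deriv_nonneg (convex_Icc 0 t)
      · exact fun u hu => (((hasDerivAt_id u).mul_const (y' t)).sub
          (hy u hu.1)).continuousAt.continuousWithinAt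
      · intro u hu
        rw [interior_Icc] at hu
        exact (((hasDerivAt_id u).mul_const (y' t)).sub
          (hy u hu.1.le)).differentiableAt.differentiableWithinAt
      · intro u hu
        rw [interior_Icc] at hu
        have hd : HasDerivAt (fun s => s * y' t - y s) (1 * y' t - y' u) u :=
          ((hasDerivAt_id u).mul_const (y' t)).sub (hy u hu.1.le)
        rw [hd.deriv]
        have := hmono ⟨hu.1.le, hu.2.le⟩ ⟨ht, le_refl t⟩ hu.2.le
        simp only [one_mul]
        linarith
    have := hmono2 ⟨le_refl 0, ht⟩ ⟨ht, le_refl t⟩ ht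
    simp only [zero_mul, hy0, sub_zero, zero_sub, neg_zero] at this
    linarith
  -- the right limit of l
  set lr : ℝ → ℝ := fun x => sSup (l '' Ioi x) with hlr_def
  have hlr_bddAbove : ∀ x : ℝ, 0 ≤ x → BddAbove (l '' Ioi x) := by
    intro x hx
    refine ⟨l 0, fun v hv => ?_⟩
    obtain ⟨u, hu, rfl⟩ := hv
    exact hl_anti (le_refl (0:ℝ)) (le_trans hx (le_of_lt hu)) (le_trans hx hu.le)
  have hlr_ub : ∀ x : ℝ, 0 ≤ x → ∀ u, x < u → l u ≤ lr x := by
    intro x hx u hu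
    exact le_csSup (hlr_bddAbove x hx) ⟨u, hu, rfl⟩
  have hlr_nonneg : ∀ x : ℝ, 0 ≤ x → 0 ≤ lr x :=
    fun x hx => le_trans (hl_nonneg (x+1) (by linarith)) (hlr_ub x hx (x+1) (by linarith))
  have hlr_le : ∀ x : ℝ, 0 ≤ x → lr x ≤ l x := by
    intro x hx
    apply csSup_le ((nonempty_Ioi (a := x)).image l)
    rintro v ⟨u, hu, rfl⟩
    exact hl_anti hx (le_trans hx hu.le) hu.le
  have hlr_tendsto : ∀ x : ℝ, 0 ≤ x → Tendsto l (𝓝[>] x) (𝓝 (lr x)) := by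
    intro x hx
    apply AntitoneOn.tendsto_nhdsGT _ (hlr_bddAbove x hx)
    intro u hu v hv huv
    exact hl_anti (le_trans hx hu.le) (le_trans hx hv.le) huv
  -- interval integrability
  have hII : ∀ a b : ℝ, 0 ≤ a → a ≤ b → IntervalIntegrable (fun s => s * l s) volume a b := by
    intro a b ha hab
    rw [intervalIntegrable_iff_integrableOn_Ioc_of_le hab]
    exact hl_int.mono_set (fun s hs => lt_of_le_of_lt ha hs.1)
  set A : ℝ → ℝ := fun u => ∫ s in (0:ℝ)..u, s * l s with hA_def
  -- A has one-sided derivative x * lr x at every x ≥ 0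
  have hA_deriv : ∀ x : ℝ, 0 ≤ x → HasDerivWithinAt A (x * lr x) (Ici x) x := by
    intro x hx
    rw [hasDerivWithinAt_iff_tendsto_slope, Ici_sdiff_left]
    have hslope_eq : ∀ z : ℝ, x < z →
        slope A x z = (∫ s in Ioc x z, s * l s) / (z - x) := by
      intro z hz
      rw [slope_def_field]
      congr 1
      rw [hA_def]
      simp only
      rw [intervalIntegral.integral_interval_sub_left (hII 0 z le_rfl (by linarith))
        (hII 0 x le_rfl hx), intervalIntegral.integral_of_le hz.le]
    have hIoc_int : ∀ z : ℝ, x < z → IntegrableOn (fun s => s * l s) (Ioc x z) :=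
      fun z hz => hl_int.mono_set (fun s hs => lt_of_le_of_lt hx hs.1)
    have hub : ∀ᶠ z in 𝓝[>] x, slope A x z ≤ z * lr x := by
      filter_upwards [self_mem_nhdsWithin] with z hz
      have hz : x < z := hz
      rw [hslope_eq z hz, div_le_iff₀ (by linarith)]
      calc ∫ s in Ioc x z, s * l s ≤ ∫ _s in Ioc x z, z * lr x := by
            apply setIntegral_mono_on (hIoc_int z hz)
              (integrableOn_const (by rw [Real.volume_Ioc]; exact ENNReal.ofReal_ne_top))
              measurableSet_Ioc
            intro s hs
            have hs1 : x < s := hs.1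
            have hs0 : 0 ≤ s := le_trans hx hs1.le
            exact mul_le_mul hs.2 (hlr_ub x hx s hs1) (hl_nonneg s hs0)
              (le_trans hs0 hs.2)
        _ = z * lr x * (z - x) := by
            rw [setIntegral_const, Real.volume_real_Ioc_of_le (by linarith), smul_eq_mul,
              mul_comm]
    have hlb : ∀ᶠ z in 𝓝[>] x, x * l z ≤ slope A x z := by
      filter_upwards [self_mem_nhdsWithin] with z hz
      have hz : x < z := hz
      rw [hslope_eq z hz, le_div_iff₀ (by linarith)]
      calc x * l z * (z - x) = ∫ _s in Ioc x z, x * l z := by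
            rw [setIntegral_const, Real.volume_real_Ioc_of_le (by linarith), smul_eq_mul,
              mul_comm]
        _ ≤ ∫ s in Ioc x z, s * l s := by
            apply setIntegral_mono_on
              (integrableOn_const (by rw [Real.volume_Ioc]; exact ENNReal.ofReal_ne_top))
              (hIoc_int z hz) measurableSet_Ioc
            intro s hs
            have hs1 : x < s := hs.1
            have hs0 : 0 ≤ s := le_trans hx hs1.le
            exact mul_le_mul (le_of_lt hs1)
              (hl_anti (le_trans hx hs1.le) (by linarith : (0:ℝ) ≤ z) hs.2)
              (hl_nonneg z (by linarith)) hs0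
    have hub_t : Tendsto (fun z => z * lr x) (𝓝[>] x) (𝓝 (x * lr x)) := by
      apply Tendsto.mono_left _ nhdsWithin_le_nhds
      exact (continuous_id.mul continuous_const).tendsto x
    have hlb_t : Tendsto (fun z => x * l z) (𝓝[>] x) (𝓝 (x * lr x)) :=
      (hlr_tendsto x hx).const_mul x
    exact tendsto_of_tendsto_of_tendsto_of_le_of_le' hlb_t hub_t hlb hub
  -- continuity of A on [0, t]
  have hA_cont : ContinuousOn A (Icc 0 t) := by
    have hint : IntegrableOn (fun s => s * l s) (Icc 0 t) := by
      rw [integrableOn_Icc_iff_integrableOn_Ioc]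
      exact hl_int.mono_set (fun s hs => hs.1)
    have := intervalIntegral.continuousOn_primitive (f := fun s => s * l s) (a := 0) (b := t) hint
    apply ContinuousOn.congr this
    intro x hx
    rw [hA_def]
    simp only
    rw [intervalIntegral.integral_of_le hx.1]
  -- Gronwall-type estimate: y' u ≤ exp (A u + ε u) on [0, t], for every ε > 0
  have hkey : ∀ ε : ℝ, 0 < ε → y' t ≤ Real.exp (A t + ε * t) := by
    intro ε hε
    refine image_le_of_liminf_slope_right_lt_deriv_boundary'
      (f := y') (f' := fun x => lr x * y x) (a := 0) (b := t)
      (B := fun u => Real.exp (A u + ε * u))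
      (B' := fun u => Real.exp (A u + ε * u) * (u * lr u + ε))
      ?cf ?cg ?ca ?cb ?cd ?ce ⟨ht, le_refl t⟩
    case cf => exact fun s hs => ((hy' s hs.1).continuousAt).continuousWithinAt
    case cg =>
      intro x hx r hr
      have hr' : lr x * y x < r := hr
      -- liminf of right slopes of y' at x is at most lr x * y x
      apply Filter.Eventually.frequently
      have hyx_cont : ContinuousAt y x := (hy x hx.1).continuousAt
      set δ := (r - lr x * y x) / (lr x + 1) with hδdef
      have hlrx1 : 0 < lr x + 1 := by linarith [hlr_nonneg x hx.1]
      have hδpos : 0 < δ := div_pos (by linarith) hlrx1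
      have hyev : ∀ᶠ s in 𝓝 x, y s < y x + δ :=
        hyx_cont.eventually (eventually_lt_nhds (by linarith))
      rw [Metric.eventually_nhds_iff] at hyev
      obtain ⟨η, hηpos, hη⟩ := hyev
      filter_upwards [Ioo_mem_nhdsGT_of_mem (⟨le_refl x, lt_add_of_pos_right x hηpos⟩ :
        x ∈ Ico x (x + η))] with z hz
      -- on [x, z], the function s ↦ r s - y' s is strictly monotone
      have hzx : x < z := hz.1
      have hkey2 : StrictMonoOn (fun s => r * s - y' s) (Icc x z) := by
        apply strictMonoOn_of_deriv_pos (convex_Icc x z)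
        · exact fun u hu => (((hasDerivAt_id u).const_mul r).sub
            (hy' u (le_trans hx.1 hu.1))).continuousAt.continuousWithinAt
        · intro u hu
          rw [interior_Icc] at hu
          have hu0 : 0 ≤ u := le_trans hx.1 hu.1.le
          have hd : HasDerivAt (fun s => r * s - y' s) (r * 1 - l u * y u) u :=
            ((hasDerivAt_id u).const_mul r).sub (hy' u hu0)
          rw [hd.deriv]
          have h1 : l u * y u ≤ lr x * y u :=
            mul_le_mul_of_nonneg_right (hlr_ub x hx.1 u hu.1) (hynn u hu0)
          have h2 : y u < y x + δ := hη (by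
            rw [Real.dist_eq, abs_lt]
            constructor
            · linarith [hu.1, hz.2]
            · linarith [hu.2, hz.2])
          have h3 : lr x * y u ≤ lr x * (y x + δ) :=
            mul_le_mul_of_nonneg_left h2.le (hlr_nonneg x hx.1)
          have h4 : lr x * (y x + δ) < r := by
            have : lr x * δ < (lr x + 1) * δ := by nlinarith
            have hδeq : (lr x + 1) * δ = r - lr x * y x := by
              rw [hδdef]; field_simp
            nlinarith
          simp only [mul_one]
          linarith
      have := hkey2 ⟨le_refl x, hzx.le⟩ ⟨hzx.le, le_refl z⟩ hzx
      simp only at this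
      rw [slope_def_field, div_lt_iff₀ (by linarith)]
      linarith
    case ca =>
      rw [hy'0, hA_def]
      simp [Real.exp_nonneg]
    case cb =>
      apply Real.continuous_exp.comp_continuousOn
      exact hA_cont.add (continuous_const.mul continuous_id).continuousOn
    case cd =>
      intro x hx
      have h1 : HasDerivWithinAt (fun u => A u + ε * u) (x * lr x + ε) (Ici x) x :=
        (hA_deriv x hx.1).add (((hasDerivAt_id x).const_mul ε).hasDerivWithinAt.congr_deriv
          (by simp [mul_one]))
      exact (Real.hasDerivAt_exp (A x + ε * x)).comp_hasDerivWithinAt x h1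
    case ce =>
      intro x hx heq
      have hyx : y x ≤ x * y' x := by
        have hstep' := jacobi_aux_step l y y' hl_nonneg hy hy' hy0 hy'0 t ht
          (fun s hs => hynn s hs.1.le)
        -- reuse: y x ≤ x * y' x via monotonicity of y' on [0, x]
        have hmono2 : MonotoneOn (fun s => s * y' x - y s) (Icc 0 x) := by
          apply monotoneOn_of_deriv_nonneg (convex_Icc 0 x)
          · exact fun u hu => (((hasDerivAt_id u).mul_const (y' x)).sub
              (hy u hu.1)).continuousAt.continuousWithinAt
          · intro u hu
            rw [interior_Icc] at hu
            exact (((hasDerivAt_id u).mul_const (y' x)).sub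
              (hy u hu.1.le)).differentiableAt.differentiableWithinAt
          · intro u hu
            rw [interior_Icc] at hu
            have hd : HasDerivAt (fun s => s * y' x - y s) (1 * y' x - y' u) u :=
              ((hasDerivAt_id u).mul_const (y' x)).sub (hy u hu.1.le)
            rw [hd.deriv]
            have := hmono ⟨hu.1.le, le_trans hu.2.le hx.2.le⟩ ⟨hx.1, hx.2.le⟩ hu.2.le
            simp only [one_mul]
            linarith
        have := hmono2 ⟨le_refl 0, hx.1⟩ ⟨hx.1, le_refl x⟩ hx.1
        simp only [zero_mul, hy0, sub_zero, zero_sub, neg_zero] at this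
        linarith
      have hBpos : 0 < Real.exp (A x + ε * x) := Real.exp_pos _
      calc lr x * y x ≤ lr x * (x * y' x) :=
            mul_le_mul_of_nonneg_left hyx (hlr_nonneg x hx.1)
        _ = y' x * (x * lr x) := by ring
        _ = Real.exp (A x + ε * x) * (x * lr x) := by rw [heq]
        _ < Real.exp (A x + ε * x) * (x * lr x + ε) := by
            apply mul_lt_mul_of_pos_left _ hBpos
            linarith
  -- pass to the limit ε → 0⁺
  have hy'le : y' t ≤ Real.exp (A t) := by
    have htends : Tendsto (fun ε : ℝ => Real.exp (A t + ε * t)) (𝓝[>] 0) (𝓝 (Real.exp (A t))) := by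
      have : Tendsto (fun ε : ℝ => Real.exp (A t + ε * t)) (𝓝 0) (𝓝 (Real.exp (A t + 0 * t))) :=
        (Real.continuous_exp.comp (continuous_const.add (continuous_id.mul
          continuous_const))).tendsto 0
      simpa using this.mono_left nhdsWithin_le_nhds
    apply ge_of_tendsto htends
    filter_upwards [self_mem_nhdsWithin] with ε hε
    exact hkey ε hε
  -- A t ≤ b₀
  have hAle : A t ≤ b₀ := by
    rw [hA_def]
    simp only
    rw [intervalIntegral.integral_of_le ht, ← hb₀]
    apply setIntegral_mono_set hl_int
    · filter_upwards [MeasureTheory.self_mem_ae_restrict measurableSet_Ioi] with s hs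
      exact mul_nonneg (le_of_lt hs) (hl_nonneg s hs.le)
    · exact HasSubset.Subset.eventuallyLE Ioc_subset_Ioi_self
  calc y t ≤ t * y' t := hy_le
    _ ≤ t * Real.exp b₀ := by
        apply mul_le_mul_of_nonneg_left _ ht
        exact le_trans hy'le (Real.exp_le_exp.2 hAle)
    _ = Real.exp b₀ * t := mul_comm _ _
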